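/- In particular, W_a is invertible, with inverse (1/(m_1⋯m_n)) · W_0, when viewed as a matrix over ℚ. -/

import Mathlib

def wronOmega {m : ℕ} [NeZero m] (x y : Fin m) : ℚ :=
  if x ≠ 0 ∧ x = y then 1 else 0

def wronMu {m : ℕ} [NeZero m] (x y : Fin m) : ℚ :=
  if x = 0 ∨ y = 0 then 1 else if x = y then -1 else 0

def Wa {n : ℕ} (m : Fin n → ℕ) [∀ i, NeZero (m i)] :
    Matrix (∀ i, Fin (m i)) (∀ i, Fin (m i)) ℚ :=
  fun g h => ∏ i, (1 - (m i : ℚ) * wronOmega (g i) (h i))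

def W0 {n : ℕ} (m : Fin n → ℕ) [∀ i, NeZero (m i)] :
    Matrix (∀ i, Fin (m i)) (∀ i, Fin (m i)) ℚ :=
  fun g h => ∏ i, wronMu (g i) (h i)

lemma sum_mu {m : ℕ} [NeZero m] (y : Fin m) :
    ∑ k : Fin m, wronMu k y = if y = 0 then (m : ℚ) else 0 := by
  rcases eq_or_ne y 0 with hy | hy
  · subst hy
    simp [wronMu]
  · rw [if_neg hy]
    have h : ∀ k : Fin m, wronMu k y
        = (if k = 0 then (1:ℚ) else 0) + (if k = y then (-1:ℚ) else 0) := by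
      intro k
      unfold wronMu
      split_ifs <;> simp_all
    simp [h, Finset.sum_add_distrib, Finset.sum_ite_eq']

lemma sum_omega_mu {m : ℕ} [NeZero m] (x y : Fin m) :
    ∑ k : Fin m, wronOmega x k * wronMu k y = if x = 0 then 0 else wronMu x y := by
  rcases eq_or_ne x 0 with hx | hx
  · simp [wronOmega, hx]
  · rw [if_neg hx]
    have h : ∀ k : Fin m, wronOmega x k * wronMu k y
        = if k = x then wronMu x y else 0 := by
      intro k
      rcases eq_or_ne k x with hk | hk
      · subst hk
        rw [if_pos rfl]
        unfold wronOmega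
        rw [if_pos ⟨hx, rfl⟩, one_mul]
      · rw [if_neg hk]
        unfold wronOmega
        rw [if_neg fun hc => hk hc.2.symm, zero_mul]
    simp [h, Finset.sum_ite_eq']

lemma key_sum {m : ℕ} [NeZero m] (x y : Fin m) :
    ∑ k : Fin m, (1 - (m : ℚ) * wronOmega x k) * wronMu k y
      = (m : ℚ) * (if x = y then 1 else 0) := by
  have : ∀ k : Fin m, (1 - (m : ℚ) * wronOmega x k) * wronMu k y
      = wronMu k y - (m : ℚ) * (wronOmega x k * wronMu k y) := by
    intro k; ring
  rw [Finset.sum_congr rfl fun k _ => this k, Finset.sum_sub_distrib,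
    ← Finset.mul_sum, sum_mu, sum_omega_mu]
  rcases eq_or_ne x 0 with hx | hx <;> rcases eq_or_ne y 0 with hy | hy <;>
    subst_vars <;> simp_all [wronMu, eq_comm] <;>
    rcases eq_or_ne x y with hxy | hxy <;> simp_all [wronMu] <;> ring

lemma Wa_mul_W0 {n : ℕ} (m : Fin n → ℕ) [∀ i, NeZero (m i)] :
    Wa m * W0 m = ((∏ i, m i : ℕ) : ℚ) • (1 : Matrix (∀ i, Fin (m i)) (∀ i, Fin (m i)) ℚ) := by
  ext g h
  rw [Matrix.mul_apply]
  have step1 : ∀ k : (∀ i, Fin (m i)), Wa m g k * W0 m k h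
      = ∏ i, (1 - (m i : ℚ) * wronOmega (g i) (k i)) * wronMu (k i) (h i) := by
    intro k
    rw [Wa, W0, ← Finset.prod_mul_distrib]
  rw [Finset.sum_congr rfl fun k _ => step1 k]
  have hps := Fintype.prod_sum
    (fun i (j : Fin (m i)) => (1 - (m i : ℚ) * wronOmega (g i) j) * wronMu j (h i))
  rw [← hps]
  have step2 : ∀ i, ∑ j : Fin (m i), (1 - (m i : ℚ) * wronOmega (g i) j) * wronMu j (h i)
      = (m i : ℚ) * (if g i = h i then 1 else 0) := fun i => key_sum _ _
  rw [Finset.prod_congr rfl fun i _ => step2 i, Finset.prod_mul_distrib]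
  by_cases hgh : g = h
  · subst hgh
    simp [Matrix.smul_apply, Matrix.one_apply]
  · obtain ⟨i, hi⟩ := Function.ne_iff.mp hgh
    have hz : ∏ i, (if g i = h i then (1:ℚ) else 0) = 0 :=
      Finset.prod_eq_zero (Finset.mem_univ i) (if_neg hi)
    rw [hz, mul_zero]
    simp [Matrix.smul_apply, Matrix.one_apply, hgh]

theorem Wa_invertible {n : ℕ} (m : Fin n → ℕ) [∀ i, NeZero (m i)] :
    IsUnit (Wa m) ∧ (Wa m)⁻¹ = ((∏ i, m i : ℕ) : ℚ)⁻¹ • W0 m := by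
  have hm : ((∏ i, m i : ℕ) : ℚ) ≠ 0 := by
    simp only [ne_eq, Nat.cast_eq_zero, Finset.prod_eq_zero_iff]
    rintro ⟨i, -, hi⟩
    exact (NeZero.ne (m i)) hi
  have hmul : Wa m * (((∏ i, m i : ℕ) : ℚ)⁻¹ • W0 m) = 1 := by
    rw [Matrix.mul_smul, Wa_mul_W0, smul_smul, inv_mul_cancel₀ hm, one_smul]
  refine ⟨?_, Matrix.inv_eq_right_inv hmul⟩
  have := congrArg Matrix.det hmul
  rw [Matrix.det_mul, Matrix.det_one] at this
  rw [Matrix.isUnit_iff_isUnit_det]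
  exact IsUnit.of_mul_eq_one _ this
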